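/- Let f : ℝ → ℂ be a differentiable function. Then the following are equivalent: (b) there exists c ∈ ℂ such that the function x ↦ (x + i)²·(f(x) − c) is operator Lipschitz; (c) there exists c ∈ ℂ such that for every operator Lipschitz function h : ℝ → ℂ, the function x ↦ (x + i)·(f(x) − c)·h(x) is operator Lipschitz (i.e., (x + i)(f − c) is a multiplier of the operator Lipschitz functions). -/

import Mathlib

open Complex

universe u

/-- Functional calculus `g(A)` for `g : ℝ → ℂ` and a (self-adjoint, hence normal)
bounded operator `A`, obtained by applying `z ↦ g (Re z)` to `A` via the continuous
functional calculus. -/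
noncomputable def opFC {H : Type u} [NormedAddCommGroup H] [InnerProductSpace ℂ H]
    [CompleteSpace H] (g : ℝ → ℂ) (A : H →L[ℂ] H) : H →L[ℂ] H :=
  cfc (fun z : ℂ => g z.re) A

/-- A function `g : ℝ → ℂ` is operator Lipschitz if there is `C ≥ 0` such that
`‖g(A) − g(B)‖ ≤ C ‖A − B‖` for all bounded self-adjoint operators `A, B` on every
complex Hilbert space. -/
def OperatorLipschitz (g : ℝ → ℂ) : Prop :=
  ∃ C : ℝ, 0 ≤ C ∧ ∀ (H : Type u) (_ : NormedAddCommGroup H) (_ : InnerProductSpace ℂ H)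
    (_ : CompleteSpace H) (A B : H →L[ℂ] H), IsSelfAdjoint A → IsSelfAdjoint B →
    ‖opFC g A - opFC g B‖ ≤ C * ‖A - B‖

section Helpers

variable {H : Type u} [NormedAddCommGroup H] [InnerProductSpace ℂ H] [CompleteSpace H]

lemma isSelfAdjoint_real_smul_one (x : ℝ) :
    IsSelfAdjoint ((x : ℂ) • (1 : H →L[ℂ] H)) := by
  simp [IsSelfAdjoint, star_smul, Complex.conj_ofReal]

lemma opFC_real_smul_one (g : ℝ → ℂ) (x : ℝ) :
    opFC g ((x : ℂ) • (1 : H →L[ℂ] H)) = g x • 1 := by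
  have h1 : ((x : ℂ) • (1 : H →L[ℂ] H)) = algebraMap ℂ (H →L[ℂ] H) (x : ℂ) := by
    simp [Algebra.algebraMap_eq_smul_one]
  rw [opFC, h1, cfc_algebraMap, Complex.ofReal_re, Algebra.algebraMap_eq_smul_one]

lemma scalar_lip [Nontrivial H] {g : ℝ → ℂ} {C : ℝ}
    (hC : ∀ A B : H →L[ℂ] H, IsSelfAdjoint A → IsSelfAdjoint B →
      ‖opFC g A - opFC g B‖ ≤ C * ‖A - B‖) (x y : ℝ) :
    ‖g x - g y‖ ≤ C * |x - y| := by
  have key := hC ((x : ℂ) • 1) ((y : ℂ) • 1)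
    (isSelfAdjoint_real_smul_one x) (isSelfAdjoint_real_smul_one y)
  have hone : ‖(1 : H →L[ℂ] H)‖ = 1 := by
    rw [ContinuousLinearMap.one_def]; exact ContinuousLinearMap.norm_id
  rw [opFC_real_smul_one, opFC_real_smul_one, ← sub_smul, ← sub_smul, norm_smul, norm_smul,
    hone, mul_one, mul_one] at key
  have hxy : ((x : ℂ) - (y : ℂ)) = ((x - y : ℝ) : ℂ) := by push_cast; ring
  rw [hxy] at key
  rwa [Complex.norm_real, Real.norm_eq_abs] at key

lemma opFC_mul {φ ψ : ℝ → ℂ} (hφ : Continuous φ) (hψ : Continuous ψ) (A : H →L[ℂ] H) :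
    opFC (fun x => φ x * ψ x) A = opFC φ A * opFC ψ A := by
  simp only [opFC]
  exact cfc_mul _ _ A ((hφ.comp Complex.continuous_re).continuousOn)
    ((hψ.comp Complex.continuous_re).continuousOn)

lemma opFC_X {A : H →L[ℂ] H} (hA : IsSelfAdjoint A) :
    opFC (fun x : ℝ => (x : ℂ) + I) A = A + I • 1 := by
  have hn : IsStarNormal A := hA.isStarNormal
  rw [opFC]
  have h1 : (spectrum ℂ A).EqOn (fun z : ℂ => ((z.re : ℂ) + I)) (fun z : ℂ => z + I) := by
    intro z hz
    simp only
    rw [← hA.mem_spectrum_eq_re hz]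
  rw [cfc_congr h1, cfc_add_const I (fun z : ℂ => z) A (continuous_id.continuousOn) hn,
    cfc_id' ℂ A hn]
  rw [Algebra.algebraMap_eq_smul_one]

lemma norm_opFC_le {φ : ℝ → ℂ} {M : ℝ} (hM : 0 ≤ M) (hφ : ∀ x, ‖φ x‖ ≤ M) (A : H →L[ℂ] H) :
    ‖opFC φ A‖ ≤ M :=
  norm_cfc_le hM fun z _ => hφ z.re

end Helpers

lemma continuous_of_scalar_lip {h : ℝ → ℂ} {D : ℝ} (hD0 : 0 ≤ D)
    (hD : ∀ x y, ‖h x - h y‖ ≤ D * |x - y|) : Continuous h :=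
  (LipschitzWith.of_dist_le_mul (K := ⟨D, hD0⟩) fun x y => by
    rw [dist_eq_norm, Real.dist_eq]; exact hD x y).continuous

lemma div_bound_aux {a b c u : ℝ} (hb : 0 ≤ b) (hc : 0 ≤ c) (h1 : 1 ≤ u)
    (hau : a * u ≤ b + c * u) : a ≤ b + c := by nlinarith

lemma one_le_norm_add_I (x : ℝ) : 1 ≤ ‖(x : ℂ) + I‖ := by
  have := Complex.abs_im_le_norm ((x : ℂ) + I)
  simpa using this

lemma abs_le_norm_add_I (x : ℝ) : |x| ≤ ‖(x : ℂ) + I‖ := by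
  have := Complex.abs_re_le_norm ((x : ℂ) + I)
  simpa using this

lemma add_I_ne_zero (x : ℝ) : (x : ℂ) + I ≠ 0 := by
  intro hx
  have := congrArg Complex.im hx
  simp at this

set_option maxHeartbeats 1000000 in
/-- The main forward implication: if `(x+i)²(f-c)` is operator Lipschitz, then
`(x+i)(f-c)` is a multiplier of the operator Lipschitz functions. -/
lemma multiplier_of_sq {f : ℝ → ℂ} (hfc : Continuous f) (c : ℂ)
    (hg : OperatorLipschitz.{u} (fun x : ℝ => ((x : ℂ) + I) ^ 2 * (f x - c)))
    {h : ℝ → ℂ} (hh : OperatorLipschitz.{u} h) :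
    OperatorLipschitz.{u} (fun x : ℝ => ((x : ℂ) + I) * (f x - c) * h x) := by
  obtain ⟨C, hC0, hC⟩ := hg
  obtain ⟨D, hD0, hD⟩ := hh
  set g : ℝ → ℂ := fun x : ℝ => ((x : ℂ) + I) ^ 2 * (f x - c) with hg_def
  set p : ℝ → ℂ := fun x : ℝ => ((x : ℂ) + I) * (f x - c) with hp_def
  set q : ℝ → ℂ := fun x : ℝ => h x * ((x : ℂ) + I)⁻¹ with hq_def
  set M : ℝ := ‖g 0‖ + C with hM_def
  set N : ℝ := ‖h 0‖ + D with hN_def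
  have hM0 : 0 ≤ M := by positivity
  have hN0 : 0 ≤ N := by positivity
  refine ⟨M * D + (C + M) * N, by positivity, ?_⟩
  intro H i1 i2 i3 A B hA hB
  rcases subsingleton_or_nontrivial H with hs | hn
  · have hz : opFC (fun x : ℝ => ((x : ℂ) + I) * (f x - c) * h x) A -
        opFC (fun x : ℝ => ((x : ℂ) + I) * (f x - c) * h x) B = 0 :=
      ContinuousLinearMap.ext fun x => Subsingleton.elim _ _
    rw [hz, norm_zero]
    positivity
  -- scalar Lipschitz estimates
  have glip : ∀ x y : ℝ, ‖g x - g y‖ ≤ C * |x - y| :=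
    scalar_lip (fun A B hA hB => hC H i1 i2 i3 A B hA hB)
  have hlip : ∀ x y : ℝ, ‖h x - h y‖ ≤ D * |x - y| :=
    scalar_lip (fun A B hA hB => hD H i1 i2 i3 A B hA hB)
  have hhc : Continuous h := continuous_of_scalar_lip hD0 hlip
  have hXc : Continuous (fun x : ℝ => (x : ℂ) + I) := Complex.continuous_ofReal.add continuous_const
  have hpc : Continuous p := by
    rw [hp_def]; exact hXc.mul (hfc.sub continuous_const)
  have hqc : Continuous q := by
    rw [hq_def]; exact hhc.mul (hXc.inv₀ add_I_ne_zero)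
  -- pointwise bounds
  have hgb : ∀ x : ℝ, ‖g x‖ ≤ ‖g 0‖ + C * |x| := by
    intro x
    have h0 : g x = g x - g 0 + g 0 := by ring
    calc ‖g x‖ = ‖g x - g 0 + g 0‖ := by rw [← h0]
    _ ≤ ‖g x - g 0‖ + ‖g 0‖ := norm_add_le _ _
    _ ≤ C * |x - 0| + ‖g 0‖ := add_le_add_left (glip x 0) _
    _ = ‖g 0‖ + C * |x| := by rw [sub_zero]; ring
  have hhb : ∀ x : ℝ, ‖h x‖ ≤ ‖h 0‖ + D * |x| := by
    intro x
    have h0 : h x = h x - h 0 + h 0 := by ring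
    calc ‖h x‖ = ‖h x - h 0 + h 0‖ := by rw [← h0]
    _ ≤ ‖h x - h 0‖ + ‖h 0‖ := norm_add_le _ _
    _ ≤ D * |x - 0| + ‖h 0‖ := add_le_add_left (hlip x 0) _
    _ = ‖h 0‖ + D * |x| := by rw [sub_zero]; ring
  have hpb : ∀ x : ℝ, ‖p x‖ ≤ M := by
    intro x
    refine div_bound_aux (norm_nonneg _) hC0 (one_le_norm_add_I x) ?_
    have h1 : p x * ((x : ℂ) + I) = g x := by rw [hp_def, hg_def]; ring
    calc ‖p x‖ * ‖(x : ℂ) + I‖ = ‖g x‖ := by rw [← norm_mul, h1]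
    _ ≤ ‖g 0‖ + C * |x| := hgb x
    _ ≤ ‖g 0‖ + C * ‖(x : ℂ) + I‖ :=
        add_le_add_right (mul_le_mul_of_nonneg_left (abs_le_norm_add_I x) hC0) _
  have hqb : ∀ x : ℝ, ‖q x‖ ≤ N := by
    intro x
    refine div_bound_aux (norm_nonneg _) hD0 (one_le_norm_add_I x) ?_
    have h1 : q x * ((x : ℂ) + I) = h x := by
      simp only [hq_def]
      rw [mul_assoc, inv_mul_cancel₀ (add_I_ne_zero x), mul_one]
    calc ‖q x‖ * ‖(x : ℂ) + I‖ = ‖h x‖ := by rw [← norm_mul, h1]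
    _ ≤ ‖h 0‖ + D * |x| := hhb x
    _ ≤ ‖h 0‖ + D * ‖(x : ℂ) + I‖ :=
        add_le_add_right (mul_le_mul_of_nonneg_left (abs_le_norm_add_I x) hD0) _
  -- operator identities
  have hnA : IsStarNormal A := hA.isStarNormal
  have hnB : IsStarNormal B := hB.isStarNormal
  have e1A : opFC (fun x : ℝ => ((x : ℂ) + I) * (f x - c) * h x) A = opFC p A * opFC h A :=
    opFC_mul hpc hhc A
  have e1B : opFC (fun x : ℝ => ((x : ℂ) + I) * (f x - c) * h x) B = opFC p B * opFC h B :=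
    opFC_mul hpc hhc B
  have e2 : opFC h B = (B + I • 1) * opFC q B := by
    have hfun : h = fun x : ℝ => ((x : ℂ) + I) * q x := by
      funext x
      simp only [hq_def]
      rw [mul_comm (h x) _, ← mul_assoc, mul_inv_cancel₀ (add_I_ne_zero x), one_mul]
    calc opFC h B = opFC (fun x : ℝ => ((x : ℂ) + I) * q x) B := by rw [← hfun]
    _ = opFC (fun x : ℝ => (x : ℂ) + I) B * opFC q B := opFC_mul hXc hqc B
    _ = (B + I • 1) * opFC q B := by rw [opFC_X hB]
  have e3 : opFC p B * (B + I • 1) = opFC g B := by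
    rw [← opFC_X hB, ← opFC_mul hpc hXc B]
    congr 1
    funext x
    rw [hp_def, hg_def]
    ring
  have e4 : opFC p A * (A + I • 1) = opFC g A := by
    rw [← opFC_X hA, ← opFC_mul hpc hXc A]
    congr 1
    funext x
    rw [hp_def, hg_def]
    ring
  -- the key algebraic identity
  have key : opFC (fun x : ℝ => ((x : ℂ) + I) * (f x - c) * h x) A -
      opFC (fun x : ℝ => ((x : ℂ) + I) * (f x - c) * h x) B =
      opFC p A * (opFC h A - opFC h B) +
        ((opFC g A - opFC g B) + opFC p A * (B - A)) * opFC q B := by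
    rw [e1A, e1B, ← e3, ← e4, e2]
    noncomm_ring
  rw [key]
  -- norm estimates
  have bp : ‖opFC p A‖ ≤ M := norm_opFC_le hM0 hpb A
  have bq : ‖opFC q B‖ ≤ N := norm_opFC_le hN0 hqb B
  have bh : ‖opFC h A - opFC h B‖ ≤ D * ‖A - B‖ := hD H i1 i2 i3 A B hA hB
  have bg : ‖opFC g A - opFC g B‖ ≤ C * ‖A - B‖ := hC H i1 i2 i3 A B hA hB
  have bBA : ‖B - A‖ = ‖A - B‖ := norm_sub_rev _ _
  have b1 : ‖opFC p A * (opFC h A - opFC h B)‖ ≤ M * (D * ‖A - B‖) :=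
    le_trans (norm_mul_le _ _) (mul_le_mul bp bh (norm_nonneg _) hM0)
  have binner : ‖(opFC g A - opFC g B) + opFC p A * (B - A)‖ ≤ C * ‖A - B‖ + M * ‖A - B‖ := by
    refine le_trans (norm_add_le _ _) (add_le_add bg ?_)
    refine le_trans (norm_mul_le _ _) ?_
    rw [bBA]
    exact mul_le_mul_of_nonneg_right bp (norm_nonneg _) |>.trans
      (le_of_eq rfl)
  have b2 : ‖((opFC g A - opFC g B) + opFC p A * (B - A)) * opFC q B‖ ≤
      (C * ‖A - B‖ + M * ‖A - B‖) * N := by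
    refine le_trans (norm_mul_le _ _) (mul_le_mul binner bq (norm_nonneg _) ?_)
    positivity
  calc ‖opFC p A * (opFC h A - opFC h B) +
      ((opFC g A - opFC g B) + opFC p A * (B - A)) * opFC q B‖
      ≤ ‖opFC p A * (opFC h A - opFC h B)‖ +
        ‖((opFC g A - opFC g B) + opFC p A * (B - A)) * opFC q B‖ := norm_add_le _ _
    _ ≤ M * (D * ‖A - B‖) + (C * ‖A - B‖ + M * ‖A - B‖) * N := add_le_add b1 b2
    _ = (M * D + (C + M) * N) * ‖A - B‖ := by ring

/-- Theorem 4.2, equivalence (b) ⇔ (c): for a differentiable `f : ℝ → ℂ`, there exists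
`c ∈ ℂ` with `x ↦ (x + i)² (f x − c)` operator Lipschitz if and only if there exists
`c ∈ ℂ` such that `(x + i)(f − c)` is a multiplier of the operator Lipschitz functions,
i.e. `x ↦ (x + i)(f x − c) h x` is operator Lipschitz for every operator Lipschitz `h`. -/
theorem stmt7 (f : ℝ → ℂ) (hf : Differentiable ℝ f) :
    (∃ c : ℂ, OperatorLipschitz.{u} (fun x : ℝ => ((x : ℂ) + I) ^ 2 * (f x - c))) ↔
      (∃ c : ℂ, ∀ h : ℝ → ℂ, OperatorLipschitz.{u} h →
        OperatorLipschitz.{u} (fun x : ℝ => ((x : ℂ) + I) * (f x - c) * h x)) := by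
  constructor
  · rintro ⟨c, hc⟩
    exact ⟨c, fun h hh => multiplier_of_sq hf.continuous c hc hh⟩
  · rintro ⟨c, hc⟩
    have hX : OperatorLipschitz.{u} (fun x : ℝ => (x : ℂ) + I) := by
      refine ⟨1, zero_le_one, ?_⟩
      intro H i1 i2 i3 A B hA hB
      rw [opFC_X hA, opFC_X hB, add_sub_add_right_eq_sub, one_mul]
    have := hc (fun x : ℝ => (x : ℂ) + I) hX
    have heq : (fun x : ℝ => ((x : ℂ) + I) * (f x - c) * ((x : ℂ) + I)) =
        (fun x : ℝ => ((x : ℂ) + I) ^ 2 * (f x - c)) := by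
      funext x; ring
    rw [heq] at this
    exact ⟨c, this⟩
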